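/- arXiv:1604.06151 — 2 statements merged into one kernel-verified Lean document; each statement's English description precedes it below -/
import Mathlib

section
/- Let K = diag(1, 1/η) with 0 < η ≤ 1, and let H ∈ ℂ^{2×M}, Q ⪰ 0. Then log det(I₂ + K⁻¹HQH*) ≥ log det(I₂ + HQH*) + log η. -/
open Matrix ComplexOrder

/-- With `K = diag(1, 1/η)`, `0 < η ≤ 1`, `H ∈ ℂ^{2×M}` and `Q ⪰ 0`:
`log₂ det(I₂ + K⁻¹ H Q Hᴴ) ≥ log₂ det(I₂ + H Q Hᴴ) + log₂ η`. -/
theorem logdet_Kinv_ge (M : ℕ) (H : Matrix (Fin 2) (Fin M) ℂ)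
    (Q : Matrix (Fin M) (Fin M) ℂ) (hQ : Q.PosSemidef)
    (η : ℝ) (hη0 : 0 < η) (hη1 : η ≤ 1) :
    Real.logb 2 ((1 + Matrix.diagonal ![1, (η : ℂ)] * (H * Q * H.conjTranspose)).det).re ≥
      Real.logb 2 ((1 + H * Q * H.conjTranspose).det).re + Real.logb 2 η := by
  set A := H * Q * H.conjTranspose with hAdef
  have hA : A.PosSemidef := hQ.mul_mul_conjTranspose_same H
  have hH := hA.isHermitian
  have h00 : 0 ≤ A 0 0 := by simpa [Matrix.mulVec, dotProduct,
    Fin.sum_univ_two, Pi.single_apply] using hA.dotProduct_mulVec_nonneg (Pi.single 0 1)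
  have h11 : 0 ≤ A 1 1 := by simpa [Matrix.mulVec, dotProduct,
    Fin.sum_univ_two, Pi.single_apply] using hA.dotProduct_mulVec_nonneg (Pi.single 1 1)
  set a := (A 0 0).re with hadef
  set d := (A 1 1).re with hddef
  have ha : A 0 0 = (a : ℂ) := by
    have := (Complex.le_def.mp h00).2
    exact Complex.ext rfl (by simpa using this.symm)
  have hd : A 1 1 = (d : ℂ) := by
    have := (Complex.le_def.mp h11).2
    exact Complex.ext rfl (by simpa using this.symm)
  have ha0 : (0:ℝ) ≤ a := (Complex.le_def.mp h00).1
  have hd0 : (0:ℝ) ≤ d := (Complex.le_def.mp h11).1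
  set p := Complex.normSq (A 0 1) with hpdef
  have hp0 : (0:ℝ) ≤ p := Complex.normSq_nonneg _
  have hbc : A 0 1 * A 1 0 = (p : ℂ) := by
    have h10 : A 1 0 = star (A 0 1) := (hH.apply 1 0).symm
    rw [h10]
    exact Complex.mul_conj (A 0 1)
  have hdet : 0 ≤ A.det := by
    rw [hH.det_eq_prod_eigenvalues]
    exact Finset.prod_nonneg fun i _ => by
      simpa using Complex.zero_le_real.mpr (hA.eigenvalues_nonneg i)
  have hdet2 : A.det = ((a * d - p : ℝ) : ℂ) := by
    rw [Matrix.det_fin_two, ha, hd, hbc]; push_cast; ring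
  have hadp : (0:ℝ) ≤ a * d - p := by
    have := (Complex.le_def.mp hdet).1
    rwa [hdet2, Complex.ofReal_re] at this
  have hL : (1 + Matrix.diagonal ![1, (η : ℂ)] * A).det
      = (((1 + a) * (1 + η * d) - η * p : ℝ) : ℂ) := by
    rw [Matrix.det_fin_two]
    simp only [Matrix.add_apply, Matrix.one_apply, Matrix.diagonal_mul,
      Matrix.cons_val_zero, Matrix.cons_val_one, Matrix.head_cons]
    simp only [if_pos rfl, if_neg (by decide : (0:Fin 2) ≠ 1),
      if_neg (by decide : (1:Fin 2) ≠ 0)]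
    rw [ha, hd]
    push_cast
    linear_combination (-(η:ℂ)) * hbc
  have hR : (1 + A).det = (((1 + a) * (1 + d) - p : ℝ) : ℂ) := by
    rw [Matrix.det_fin_two]
    simp only [Matrix.add_apply, Matrix.one_apply]
    simp only [if_pos rfl, if_neg (by decide : (0:Fin 2) ≠ 1),
      if_neg (by decide : (1:Fin 2) ≠ 0)]
    rw [ha, hd]
    push_cast
    linear_combination -hbc
  rw [hL, hR, Complex.ofReal_re, Complex.ofReal_re]
  have hXpos : (0:ℝ) < (1 + a) * (1 + d) - p := by nlinarith
  have hYpos : (0:ℝ) < ((1 + a) * (1 + d) - p) * η := by positivity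
  have hstep : ((1 + a) * (1 + d) - p) * η ≤ (1 + a) * (1 + η * d) - η * p := by
    nlinarith
  calc Real.logb 2 ((1 + a) * (1 + d) - p) + Real.logb 2 η
      = Real.logb 2 (((1 + a) * (1 + d) - p) * η) :=
        (Real.logb_mul hXpos.ne' hη0.ne').symm
    _ ≤ Real.logb 2 ((1 + a) * (1 + η * d) - η * p) :=
        Real.logb_le_logb_of_le (by norm_num) hYpos hstep
end

section
/- Every chordal graph is perfect: for every induced subgraph of a chordal graph, the chromatic number equals the clique number. -/
namespace SimpleGraph
namespace Walk

variable {V : Type*} {G : SimpleGraph V}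

lemma getVert_mem_support' {u v : V} (p : G.Walk u v) {n : ℕ} (hn : n ≤ p.length) :
    p.getVert n ∈ p.support :=
  mem_support_iff_exists_getVert.2 ⟨n, rfl, hn⟩

/-- Take the first `n` darts of a walk. -/
def take' {u v : V} : (p : G.Walk u v) → (n : ℕ) → G.Walk u (p.getVert n)
  | p, 0 => Walk.nil.copy rfl (p.getVert_zero).symm
  | .nil, _ + 1 => Walk.nil
  | .cons h q, n + 1 => Walk.cons h (q.take' n)

/-- Drop the first `n` darts of a walk. -/
def drop' {u v : V} : (p : G.Walk u v) → (n : ℕ) → G.Walk (p.getVert n) v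
  | p, 0 => p.copy (p.getVert_zero).symm rfl
  | .nil, _ + 1 => Walk.nil
  | .cons _ q, n + 1 => q.drop' n

lemma length_take' {u v : V} : ∀ (p : G.Walk u v) (n : ℕ), n ≤ p.length →
    (p.take' n).length = n
  | _, 0, _ => by simp [take']
  | .nil, n + 1, h => by simp at h
  | .cons h q, n + 1, hn => by
      simp only [take', length_cons]
      exact congrArg (· + 1) (length_take' q n (by simpa using hn))

lemma length_drop' {u v : V} : ∀ (p : G.Walk u v) (n : ℕ),
    (p.drop' n).length = p.length - n
  | _, 0 => by simp [drop']
  | .nil, n + 1 => by simp [drop']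
  | .cons h q, n + 1 => by
      simp only [drop', length_cons]
      refine (length_drop' q n).trans ?_
      omega

lemma support_take'_subset {u v : V} : ∀ (p : G.Walk u v) (n : ℕ),
    (p.take' n).support ⊆ p.support
  | p, 0 => by simp [take']
  | .nil, n + 1 => by simp [take']
  | .cons h q, n + 1 => by
      simp only [take', support_cons]
      intro x hx
      rcases List.mem_cons.1 hx with h1 | h2
      · exact h1 ▸ List.mem_cons_self
      · exact List.mem_cons_of_mem _ (support_take'_subset q n h2)

lemma support_drop'_subset {u v : V} : ∀ (p : G.Walk u v) (n : ℕ),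
    (p.drop' n).support ⊆ p.support
  | p, 0 => by simp [drop']
  | .nil, n + 1 => fun x hx => by simpa [drop', Walk.getVert] using hx
  | .cons h q, n + 1 => by
      simp only [drop', support_cons]
      exact fun x hx => List.mem_cons_of_mem _ (support_drop'_subset q n hx)

lemma getVert_map' {V' : Type*} {G' : SimpleGraph V'} (f : G →g G') {u v : V} :
    ∀ (p : G.Walk u v) (i : ℕ), (p.map f).getVert i = f (p.getVert i)
  | .nil, _ => rfl
  | .cons h q, 0 => rfl
  | .cons h q, i + 1 => by
      simp only [map_cons, getVert_cons_succ]
      exact getVert_map' f q i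

lemma IsPath.getVert_injOn' {u v : V} {p : G.Walk u v} (hp : p.IsPath) :
    ∀ {i j : ℕ}, i ≤ p.length → j ≤ p.length → p.getVert i = p.getVert j → i = j := by
  induction p with
  | nil => intro i j hi hj _; simp at hi hj; omega
  | cons h q ih =>
    intro i j hi hj hij
    have hq : q.IsPath := hp.of_cons
    have hu : _ ∉ q.support := ((cons_isPath_iff _ _).1 hp).2
    match i, j with
    | 0, 0 => rfl
    | 0, j + 1 =>
      exfalso
      apply hu
      rw [getVert_zero, getVert_cons_succ] at hij
      exact hij ▸ q.getVert_mem_support' (by simpa using hj)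
    | i + 1, 0 =>
      exfalso
      apply hu
      rw [getVert_zero, getVert_cons_succ] at hij
      exact hij ▸ q.getVert_mem_support' (by simpa using hi)
    | i + 1, j + 1 =>
      simp only [getVert_cons_succ] at hij
      have := ih hq (by simpa using hi) (by simpa using hj) hij
      omega

end Walk
end SimpleGraph

/-- A graph is chordal if every cycle of length greater than three has a
chord: an edge of the graph joining two non-consecutive vertices of the
cycle (and which is not the closing edge of the cycle). -/
def SimpleGraph.IsChordal {V : Type*} (G : SimpleGraph V) : Prop :=
  ∀ ⦃v : V⦄ (c : G.Walk v v), c.IsCycle → 3 < c.length →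
    ∃ i j : ℕ, i + 1 < j ∧ j < c.length ∧ ¬(i = 0 ∧ j + 1 = c.length) ∧
      G.Adj (c.getVert i) (c.getVert j)

namespace SimpleGraph

variable {V : Type*} {G : SimpleGraph V}

/-- If `p` is a minimum-length walk among walks from `x` to `y` whose support satisfies `T`,
then `p` has no shortcuts. -/
lemma no_shortcut {T : V → Prop} {x y : V} {p : G.Walk x y}
    (hmin : ∀ w : G.Walk x y, (∀ v ∈ w.support, T v) → p.length ≤ w.length)
    (hsup : ∀ v ∈ p.support, T v) {i j : ℕ} (hij : i + 1 < j) (hj : j ≤ p.length)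
    (hadj : G.Adj (p.getVert i) (p.getVert j)) : False := by
  classical
  let w : G.Walk x y := (p.take' i).append (Walk.cons hadj (p.drop' j))
  have hws : ∀ v ∈ w.support, T v := by
    intro v hv
    rw [Walk.mem_support_append_iff] at hv
    rcases hv with hv | hv
    · exact hsup v (p.support_take'_subset i hv)
    · rw [Walk.support_cons] at hv
      rcases List.mem_cons.1 hv with rfl | hv
      · exact hsup _ (p.getVert_mem_support' (by omega))
      · exact hsup v (p.support_drop'_subset j hv)
  have hlen : w.length = i + 1 + (p.length - j) := by
    simp only [w, Walk.length_append, Walk.length_cons, p.length_take' i (by omega),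
      p.length_drop' j]
    omega
  have := hmin w hws
  omega

/-- Chordality is inherited along graph embeddings. -/
lemma IsChordal.comap {V' : Type*} {G' : SimpleGraph V'} (f : G ↪g G')
    (h : G'.IsChordal) : G.IsChordal := by
  intro v c hc hl
  have hc' : (c.map f.toHom).IsCycle :=
    (Walk.map_isCycle_iff_of_injective f.injective).2 hc
  have hl' : 3 < (c.map f.toHom).length := by rwa [Walk.length_map]
  obtain ⟨i, j, hij, hjl, hne, hadj⟩ := h (c.map f.toHom) hc' hl'
  rw [Walk.length_map] at hjl hne
  rw [Walk.getVert_map', Walk.getVert_map'] at hadj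
  exact ⟨i, j, hij, hjl, hne, f.map_adj_iff.1 hadj⟩

/-- The endpoint of a path does not belong to `takeUntil` at an earlier vertex. -/
lemma not_mem_support_takeUntil [DecidableEq V] {a x : V} {p : G.Walk a x}
    (hp : p.IsPath) {u : V} (hu : u ∈ p.support) (hux : u ≠ x) :
    x ∉ (p.takeUntil u hu).support := by
  intro hxmem
  have hspec := p.take_spec hu
  have hnodup : p.support.Nodup := hp.support_nodup
  rw [← hspec, Walk.support_append] at hnodup
  have hxdrop : x ∈ (p.dropUntil u hu).support.tail := by
    have hxd : x ∈ (p.dropUntil u hu).support := Walk.end_mem_support _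
    rw [Walk.support_eq_cons] at hxd
    exact (List.mem_cons.1 hxd).resolve_left (Ne.symm hux)
  exact (List.disjoint_of_nodup_append hnodup) hxmem hxdrop

end SimpleGraph

namespace SimpleGraph

variable {V : Type*} {G : SimpleGraph V}

/-- The set of vertices reachable from `a` by walks avoiding `S`. -/
def reach (G : SimpleGraph V) (a : V) (S : Finset V) : Set V :=
  {u | ∃ w : G.Walk a u, ∀ x ∈ w.support, x ∉ S}

lemma mem_reach_self {a : V} {S : Finset V} (ha : a ∉ S) : a ∈ G.reach a S :=
  ⟨Walk.nil, by simp [ha]⟩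

lemma not_mem_of_mem_reach {a u : V} {S : Finset V} (hu : u ∈ G.reach a S) : u ∉ S := by
  obtain ⟨w, hw⟩ := hu
  exact hw u w.end_mem_support

lemma reach_adj {a u v : V} {S : Finset V} (hu : u ∈ G.reach a S) (ha : G.Adj u v)
    (hv : v ∉ S) : v ∈ G.reach a S := by
  obtain ⟨w, hw⟩ := hu
  refine ⟨w.concat ha, fun x hx => ?_⟩
  rw [Walk.support_concat, List.mem_append] at hx
  rcases hx with hx | hx
  · exact hw x hx
  · simp only [List.mem_singleton] at hx
    exact hx ▸ hv

lemma mem_reach_of_mem_support [DecidableEq V] {a u : V} {S : Finset V} (w : G.Walk a u)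
    (hw : ∀ x ∈ w.support, x ∉ S) {v : V} (hv : v ∈ w.support) : v ∈ G.reach a S :=
  ⟨w.takeUntil v hv, fun x hx => hw x (w.support_takeUntil_subset hv hx)⟩

section Sep

variable {a b : V} {S : Finset V}
  (hsep : ∀ w : G.Walk a b, ∃ x ∈ S, x ∈ w.support)

include hsep

lemma reach_disjoint {u : V} (hu : u ∈ G.reach a S) (hv : u ∈ G.reach b S) : False := by
  obtain ⟨w₁, hw₁⟩ := hu
  obtain ⟨w₂, hw₂⟩ := hv
  obtain ⟨x, hxS, hxsup⟩ := hsep (w₁.append w₂.reverse)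
  rw [Walk.mem_support_append_iff] at hxsup
  rcases hxsup with hx | hx
  · exact hw₁ x hx hxS
  · rw [Walk.support_reverse, List.mem_reverse] at hx
    exact hw₂ x hx hxS

lemma reach_not_adj {u v : V} (hu : u ∈ G.reach a S) (hv : v ∈ G.reach b S) :
    ¬ G.Adj u v := fun hadj =>
  reach_disjoint hsep (reach_adj hu hadj (not_mem_of_mem_reach hv)) hv

/-- The key chordality argument : two vertices of a separator that each have neighbours on
both sides are adjacent. -/
lemma separator_adj [DecidableEq V] (hG : G.IsChordal) {x y : V} (hxy : x ≠ y)
    (hxa : ∃ u ∈ G.reach a S, G.Adj x u) (hya : ∃ u ∈ G.reach a S, G.Adj y u)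
    (hxb : ∃ u ∈ G.reach b S, G.Adj x u) (hyb : ∃ u ∈ G.reach b S, G.Adj y u) :
    G.Adj x y := by
  classical
  by_contra hnadj
  -- build a walk from x to y through each side
  have build : ∀ (c : V), (∃ u ∈ G.reach c S, G.Adj x u) → (∃ u ∈ G.reach c S, G.Adj y u) →
      ∃ w : G.Walk x y, ∀ v ∈ w.support, v = x ∨ v = y ∨ v ∈ G.reach c S := by
    rintro c ⟨u₁, hu₁, hxu₁⟩ ⟨u₂, hu₂, hyu₂⟩
    obtain ⟨w₁, hw₁⟩ := hu₁
    obtain ⟨w₂, hw₂⟩ := hu₂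
    refine ⟨Walk.cons hxu₁ ((w₁.reverse.append w₂).concat hyu₂.symm), fun v hv => ?_⟩
    rw [Walk.support_cons, List.mem_cons] at hv
    rcases hv with rfl | hv
    · exact Or.inl rfl
    rw [Walk.support_concat, List.mem_append] at hv
    rcases hv with hv | hv
    · rw [Walk.mem_support_append_iff] at hv
      rcases hv with hv | hv
      · rw [Walk.support_reverse, List.mem_reverse] at hv
        exact Or.inr (Or.inr (mem_reach_of_mem_support w₁ hw₁ hv))
      · exact Or.inr (Or.inr (mem_reach_of_mem_support w₂ hw₂ hv))
    · simp only [List.mem_singleton] at hv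
      exact Or.inr (Or.inl hv)
  -- minimal-length walks on each side
  have minwalk : ∀ (c : V), (∃ w : G.Walk x y, ∀ v ∈ w.support, v = x ∨ v = y ∨ v ∈ G.reach c S) →
      ∃ p : G.Walk x y, p.IsPath ∧ (∀ v ∈ p.support, v = x ∨ v = y ∨ v ∈ G.reach c S) ∧
        (∀ w : G.Walk x y, (∀ v ∈ w.support, v = x ∨ v = y ∨ v ∈ G.reach c S) →
          p.length ≤ w.length) := by
    rintro c ⟨w0, hw0⟩
    have hex : ∃ n, ∃ w : G.Walk x y,
        (∀ v ∈ w.support, v = x ∨ v = y ∨ v ∈ G.reach c S) ∧ w.length = n :=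
      ⟨w0.length, w0, hw0, rfl⟩
    obtain ⟨w', hw', hw'len⟩ := Nat.find_spec hex
    refine ⟨w'.bypass, w'.bypass_isPath, fun v hv => hw' v (w'.support_bypass_subset hv),
      fun w hw => ?_⟩
    calc w'.bypass.length ≤ w'.length := w'.length_bypass_le
      _ = Nat.find hex := hw'len
      _ ≤ w.length := Nat.find_min' hex ⟨w, hw, rfl⟩
  obtain ⟨p, hpPath, hpsup, hminP⟩ := minwalk a (build a hxa hya)
  obtain ⟨q, hqPath, hqsup, hminQ⟩ := minwalk b (build b hxb hyb)
  -- both walks have length at least 2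
  have twole : ∀ (w : G.Walk x y), 2 ≤ w.length := by
    intro w
    rcases Nat.lt_or_ge w.length 2 with hl | hl
    · interval_cases hlen : w.length
      · exact absurd (Walk.eq_of_length_eq_zero hlen) hxy
      · exfalso
        have := w.adj_getVert_succ (i := 0) (by omega)
        rw [Walk.getVert_zero] at this
        have hy : w.getVert 1 = y := by
          have := w.getVert_length; rwa [hlen] at this
        exact hnadj (hy ▸ this)
    · exact hl
  have hp2 := twole p
  have hq2 := twole q
  -- internal vertices
  have hInt : ∀ (c : V) (w : G.Walk x y), w.IsPath →
      (∀ v ∈ w.support, v = x ∨ v = y ∨ v ∈ G.reach c S) →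
      ∀ i, 0 < i → i < w.length → w.getVert i ∈ G.reach c S := by
    intro c w hw hwsup i hi0 hil
    rcases hwsup _ (w.getVert_mem_support' hil.le) with hx | hy | hr
    · exfalso
      have : i = 0 := hw.getVert_injOn' hil.le (by omega) (by rw [hx, Walk.getVert_zero])
      omega
    · exfalso
      have : i = w.length := hw.getVert_injOn' hil.le le_rfl (by rw [hy, Walk.getVert_length])
      omega
    · exact hr
  have hpInt := hInt a p hpPath hpsup
  have hqInt := hInt b q hqPath hqsup
  -- the cycle
  set c : G.Walk x x := p.append q.reverse with hc
  have hclen : c.length = p.length + q.length := by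
    simp [hc, Walk.length_append, Walk.length_reverse]
  -- support facts
  have hsupInter : ∀ z, z ∈ p.support → z ∈ q.support → z = x ∨ z = y := by
    intro z hzp hzq
    rcases hpsup z hzp with h | h | h
    · exact Or.inl h
    · exact Or.inr h
    rcases hqsup z hzq with h' | h' | h'
    · exact Or.inl h'
    · exact Or.inr h'
    exact absurd (reach_disjoint hsep h h') not_false
  have htailx : x ∉ p.support.tail := by
    have h := hpPath.support_nodup
    rw [p.support_eq_cons] at h
    exact (List.nodup_cons.1 h).1
  have htaily : y ∉ q.reverse.support.tail := by
    have h := hqPath.reverse.support_nodup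
    rw [q.reverse.support_eq_cons] at h
    exact (List.nodup_cons.1 h).1
  have hcyc : c.IsCycle := by
    refine ⟨⟨⟨?_⟩, ?_⟩, ?_⟩
    · -- edges nodup
      rw [hc, Walk.edges_append]
      refine List.Nodup.append hpPath.isTrail.edges_nodup hqPath.reverse.isTrail.edges_nodup ?_
      intro e hep heq
      induction e with
      | h z₁ z₂ =>
        have hz₁p := p.fst_mem_support_of_mem_edges hep
        have hz₂p := p.snd_mem_support_of_mem_edges hep
        rw [Walk.edges_reverse, List.mem_reverse] at heq
        have hz₁q := q.fst_mem_support_of_mem_edges heq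
        have hz₂q := q.snd_mem_support_of_mem_edges heq
        have hadj := p.adj_of_mem_edges hep
        rcases hsupInter z₁ hz₁p hz₁q with rfl | rfl <;>
          rcases hsupInter z₂ hz₂p hz₂q with rfl | rfl
        · exact hadj.ne rfl
        · exact hnadj hadj
        · exact hnadj hadj.symm
        · exact hadj.ne rfl
    · -- not nil
      intro hnil
      have : c.length = 0 := by rw [hnil]; rfl
      omega
    · -- support tail nodup
      have hct : c.support.tail = p.support.tail ++ q.reverse.support.tail := by
        rw [hc, Walk.support_append, List.tail_append_of_ne_nil p.support_ne_nil]
      rw [hct]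
      refine List.Nodup.append ?_ ?_ ?_
      · have h := hpPath.support_nodup
        rw [p.support_eq_cons] at h
        exact (List.nodup_cons.1 h).2
      · have h := hqPath.reverse.support_nodup
        rw [q.reverse.support_eq_cons] at h
        exact (List.nodup_cons.1 h).2
      · intro z hzp hzq
        have hzp' : z ∈ p.support := List.mem_of_mem_tail hzp
        have hzq' : z ∈ q.support := by
          have := List.mem_of_mem_tail hzq
          rwa [Walk.support_reverse, List.mem_reverse] at this
        rcases hsupInter z hzp' hzq' with rfl | rfl
        · exact htailx hzp
        · exact htaily hzq
  obtain ⟨i, j, hij, hjl, hnc, hadj⟩ := hG c hcyc (by omega)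
  rw [hclen] at hjl hnc
  -- getVert computations
  have hc1 : ∀ k, k ≤ p.length → c.getVert k = p.getVert k := by
    intro k hk
    rw [hc, Walk.getVert_append]
    split_ifs with h
    · rfl
    · have hkp : k = p.length := by omega
      subst hkp
      simp [Walk.getVert_length]
  have hc2 : ∀ k, p.length ≤ k → c.getVert k = q.getVert (q.length - (k - p.length)) := by
    intro k hk
    rw [hc, Walk.getVert_append, if_neg (by omega), Walk.getVert_reverse]
  rcases le_or_gt j p.length with hjp | hjp
  · -- chord inside p
    have hadj' : G.Adj (p.getVert i) (p.getVert j) := by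
      rwa [hc1 i (by omega), hc1 j hjp] at hadj
    exact no_shortcut hminP hpsup hij hjp hadj'
  rcases le_or_gt p.length i with hpi | hpi
  · -- chord inside q
    have hadj' : G.Adj (q.getVert (q.length - (i - p.length)))
        (q.getVert (q.length - (j - p.length))) := by
      rwa [hc2 i hpi, hc2 j (by omega)] at hadj
    exact no_shortcut hminQ hqsup
      (i := q.length - (j - p.length)) (j := q.length - (i - p.length))
      (by omega) (by omega) hadj'.symm
  · -- chord between the two sides
    have hcj : c.getVert j = q.getVert (q.length - (j - p.length)) := hc2 j (by omega)
    set m : ℕ := q.length - (j - p.length) with hm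
    have hm1 : 0 < m := by omega
    have hm2 : m < q.length := by omega
    have hBj : c.getVert j ∈ G.reach b S := hcj ▸ hqInt m hm1 hm2
    rcases Nat.eq_zero_or_pos i with rfl | hi0
    · -- chord from x into q
      have hjc : j + 1 ≠ p.length + q.length := fun hcon => hnc ⟨rfl, hcon⟩
      have hm3 : 2 ≤ m := by omega
      have hadj' : G.Adj (q.getVert 0) (q.getVert m) := by
        rw [Walk.getVert_zero]
        have hx0 : c.getVert 0 = x := c.getVert_zero
        rw [hx0, hcj] at hadj
        exact hadj
      exact no_shortcut hminQ hqsup (i := 0) (j := m) (by omega) hm2.le hadj'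
    · have hAi : c.getVert i ∈ G.reach a S := by
        rw [hc1 i hpi.le]
        exact hpInt i hi0 hpi
      exact reach_not_adj hsep hAi hBj hadj

end Sep

end SimpleGraph

namespace SimpleGraph

universe u

variable {V : Type*}

/-- A vertex is simplicial if its neighbourhood is a clique. -/
def IsSimplicial (G : SimpleGraph V) (v : V) : Prop :=
  ∀ x y, G.Adj v x → G.Adj v y → x ≠ y → G.Adj x y

/-- Extraction of a simplicial vertex on the `a`-side of a separator whose
vertices form a clique. -/
lemma side_simplicial (n : ℕ)
    (ih : ∀ {W : Type u} [Fintype W] [DecidableEq W] (H : SimpleGraph W),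
      Fintype.card W ≤ n → H.IsChordal → ∀ a b : W, a ≠ b → ¬H.Adj a b →
      ∃ v w : W, v ≠ w ∧ ¬H.Adj v w ∧ IsSimplicial H v ∧ IsSimplicial H w)
    {V : Type u} [Fintype V] [DecidableEq V] {G : SimpleGraph V} (hG : G.IsChordal)
    (hcard : Fintype.card V ≤ n + 1)
    {a b : V} {S : Finset V} (hSa : a ∉ S) (hSb : b ∉ S)
    (hsep : ∀ w : G.Walk a b, ∃ x ∈ S, x ∈ w.support)
    (hclique : ∀ x ∈ S, ∀ y ∈ S, x ≠ y → G.Adj x y) :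
    ∃ v ∈ G.reach a S, IsSimplicial G v := by
  classical
  set A := G.reach a S with hA
  set U : Set V := A ∪ ↑S with hU
  have hbU : b ∉ U := by
    rintro (hb | hb)
    · exact reach_disjoint hsep hb (mem_reach_self hSb)
    · exact hSb hb
  have hchordU : (G.induce U).IsChordal := IsChordal.comap (Embedding.induce U) hG
  have hcardU : Fintype.card ↥U ≤ n := by
    have hlt : Fintype.card ↥U < Fintype.card V := by
      refine Fintype.card_lt_of_injective_of_notMem Subtype.val Subtype.val_injective (b := b) ?_
      rintro ⟨⟨z, hz⟩, hzb⟩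
      exact hbU (hzb ▸ hz)
    omega
  have hnbrU : ∀ v ∈ A, ∀ u, G.Adj v u → u ∈ U := by
    intro v hv u hadj
    by_cases h : u ∈ S
    · exact Or.inr h
    · exact Or.inl (reach_adj hv hadj h)
  have main : ∃ v : ↥U, (↑v ∈ A) ∧ IsSimplicial (G.induce U) v := by
    by_cases hcomp : ∀ p q : ↥U, p ≠ q → (G.induce U).Adj p q
    · exact ⟨⟨a, Or.inl (mem_reach_self hSa)⟩, mem_reach_self hSa,
        fun x y _ _ hxy => hcomp x y hxy⟩
    · push_neg at hcomp
      obtain ⟨p, q, hpq, hnadj⟩ := hcomp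
      obtain ⟨v, w, hvw, hnadj', hv, hw⟩ := ih (G.induce U) hcardU hchordU p q hpq hnadj
      have hone : (↑v : V) ∈ A ∨ (↑w : V) ∈ A := by
        by_contra hcon
        push_neg at hcon
        have hvS : (↑v : V) ∈ S := v.2.resolve_left hcon.1
        have hwS : (↑w : V) ∈ S := w.2.resolve_left hcon.2
        have hcvw : (↑v : V) ≠ ↑w := Subtype.coe_injective.ne hvw
        exact hnadj' (by simpa [comap_adj] using hclique _ hvS _ hwS hcvw)
      rcases hone with h | h
      · exact ⟨v, h, hv⟩
      · exact ⟨w, h, hw⟩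
  obtain ⟨v, hvA, hvsimp⟩ := main
  refine ⟨↑v, hvA, ?_⟩
  intro x y hvx hvy hxy
  have hxU : x ∈ U := hnbrU _ hvA x hvx
  have hyU : y ∈ U := hnbrU _ hvA y hvy
  have := hvsimp ⟨x, hxU⟩ ⟨y, hyU⟩ (by simpa [comap_adj] using hvx)
    (by simpa [comap_adj] using hvy) (fun hcon => hxy (congrArg Subtype.val hcon))
  simpa [comap_adj] using this

/-- Dirac's theorem, strong form: a finite chordal graph with two nonadjacent vertices has
two nonadjacent simplicial vertices. -/
theorem dirac (n : ℕ) :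
    ∀ {V : Type u} [Fintype V] [DecidableEq V] (G : SimpleGraph V),
      Fintype.card V ≤ n → G.IsChordal → ∀ a b : V, a ≠ b → ¬G.Adj a b →
      ∃ v w : V, v ≠ w ∧ ¬G.Adj v w ∧ IsSimplicial G v ∧ IsSimplicial G w := by
  induction n with
  | zero =>
    intro V _ _ G hcard hG a b hne hnadj
    have : 0 < Fintype.card V := Fintype.card_pos_iff.2 ⟨a⟩
    omega
  | succ n ih =>
    intro V _ _ G hcard hG a b hne hnadj
    classical
    -- minimal separator
    set SepPred : Finset V → Prop :=
      fun S => a ∉ S ∧ b ∉ S ∧ ∀ w : G.Walk a b, ∃ x ∈ S, x ∈ w.support with hSepPred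
    have hS0 : SepPred (Finset.univ \ {a, b}) := by
      refine ⟨by simp, by simp, fun w => ?_⟩
      have hlen : 0 < w.length := by
        rcases Nat.eq_zero_or_pos w.length with h | h
        · exact absurd (Walk.eq_of_length_eq_zero h) hne
        · exact h
      have hadj1 : G.Adj a (w.getVert 1) := by
        have := w.adj_getVert_succ (i := 0) hlen
        rwa [Walk.getVert_zero] at this
      refine ⟨w.getVert 1, ?_, w.getVert_mem_support' (by omega)⟩
      simp only [Finset.mem_sdiff, Finset.mem_univ, true_and, Finset.mem_insert,
        Finset.mem_singleton, not_or]
      exact ⟨hadj1.ne', fun h => hnadj (h ▸ hadj1)⟩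
    have hex : ∃ k, ∃ S : Finset V, SepPred S ∧ S.card = k := ⟨_, _, hS0, rfl⟩
    obtain ⟨S, hSsep, hScard⟩ := Nat.find_spec hex
    have hminS : ∀ T : Finset V, SepPred T → S.card ≤ T.card := fun T hT => by
      rw [hScard]; exact Nat.find_min' hex ⟨T, hT, rfl⟩
    obtain ⟨hSa, hSb, hsep⟩ := hSsep
    have hsep' : ∀ w : G.Walk b a, ∃ x ∈ S, x ∈ w.support := by
      intro w
      obtain ⟨x, hx1, hx2⟩ := hsep w.reverse
      rw [Walk.support_reverse, List.mem_reverse] at hx2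
      exact ⟨x, hx1, hx2⟩
    -- every separator vertex has neighbours on both sides
    have side : ∀ (x : V), x ∈ S → ∀ (c : V) (r : G.Walk x c), r.IsPath →
        (∀ y ∈ r.support, y ∈ S → y = x) → c ≠ x → ∃ u ∈ G.reach c S, G.Adj x u := by
      intro x _ c r hr hrS hcx
      have hlen : 0 < r.length :=
        Nat.pos_of_ne_zero (fun h0 => hcx (Walk.eq_of_length_eq_zero h0).symm)
      have hadjxu : G.Adj x (r.getVert 1) := by
        have := r.adj_getVert_succ (i := 0) hlen
        rwa [Walk.getVert_zero] at this
      have hux : r.getVert 1 ≠ x := by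
        intro h
        have := hr.getVert_injOn' (i := 1) (j := 0) (by omega) (by omega)
          (by rw [h, Walk.getVert_zero])
        omega
      have hur : r.getVert 1 ∈ r.reverse.support := by
        rw [Walk.support_reverse, List.mem_reverse]
        exact r.getVert_mem_support' (by omega)
      refine ⟨r.getVert 1, ⟨r.reverse.takeUntil _ hur, fun z hz => ?_⟩, hadjxu⟩
      intro hzS
      have hzr : z ∈ r.support := by
        have := r.reverse.support_takeUntil_subset hur hz
        rwa [Walk.support_reverse, List.mem_reverse] at this
      have hzx := hrS z hzr hzS
      subst hzx
      exact not_mem_support_takeUntil hr.reverse hur hux hz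
    have hnbr : ∀ x ∈ S,
        (∃ u ∈ G.reach a S, G.Adj x u) ∧ (∃ u ∈ G.reach b S, G.Adj x u) := by
      intro x hxS
      have hno : ¬ SepPred (S.erase x) := by
        intro hT
        have h1 := hminS _ hT
        have h2 : (S.erase x).card < S.card := Finset.card_erase_lt_of_mem hxS
        omega
      have hae : a ∉ S.erase x := fun h => hSa (Finset.erase_subset _ _ h)
      have hbe : b ∉ S.erase x := fun h => hSb (Finset.erase_subset _ _ h)
      have hwex : ∃ w : G.Walk a b, ∀ y ∈ S.erase x, y ∉ w.support := by
        by_contra hcon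
        push_neg at hcon
        exact hno ⟨hae, hbe, hcon⟩
      obtain ⟨w, hw⟩ := hwex
      have hw'path : w.bypass.IsPath := w.bypass_isPath
      have hw' : ∀ y ∈ w.bypass.support, y ∈ S → y = x := by
        intro y hy hyS
        by_contra hne'
        exact hw y (Finset.mem_erase.2 ⟨hne', hyS⟩) (w.support_bypass_subset hy)
      have hx : x ∈ w.bypass.support := by
        obtain ⟨z, hzS, hzsup⟩ := hsep w.bypass
        have := hw' z hzsup hzS
        exact this ▸ hzsup
      -- a-side via the reversed prefix
      have htpath : (w.bypass.takeUntil x hx).IsPath := hw'path.takeUntil hx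
      have hdpath : (w.bypass.dropUntil x hx).IsPath := hw'path.dropUntil hx
      constructor
      · refine side x hxS a (w.bypass.takeUntil x hx).reverse htpath.reverse ?_
          (fun h => hSa (h ▸ hxS))
        intro y hy
        rw [Walk.support_reverse, List.mem_reverse] at hy
        exact hw' y (w.bypass.support_takeUntil_subset hx hy)
      · refine side x hxS b (w.bypass.dropUntil x hx) hdpath ?_ (fun h => hSb (h ▸ hxS))
        intro y hy
        exact hw' y (w.bypass.support_dropUntil_subset hx hy)
    have hclique : ∀ x ∈ S, ∀ y ∈ S, x ≠ y → G.Adj x y := by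
      intro x hx y hy hxy
      exact separator_adj hsep hG hxy (hnbr x hx).1 (hnbr y hy).1 (hnbr x hx).2 (hnbr y hy).2
    obtain ⟨v, hvA, hvsimp⟩ := side_simplicial n @ih hG hcard hSa hSb hsep hclique
    obtain ⟨w, hwB, hwsimp⟩ := side_simplicial n @ih hG hcard hSb hSa hsep' (fun x hx y hy hxy =>
      hclique x hx y hy hxy)
    exact ⟨v, w, fun h => reach_disjoint hsep (h ▸ hvA) hwB,
      reach_not_adj hsep hvA hwB, hvsimp, hwsimp⟩

end SimpleGraph

namespace SimpleGraph

universe u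

/-- Every nonempty finite chordal graph has a simplicial vertex. -/
lemma exists_simplicial {V : Type u} [Fintype V] [DecidableEq V] [Nonempty V]
    {G : SimpleGraph V} (hG : G.IsChordal) : ∃ v, IsSimplicial G v := by
  by_cases hcomp : ∀ p q : V, p ≠ q → G.Adj p q
  · exact ⟨Classical.arbitrary V, fun x y _ _ hxy => hcomp x y hxy⟩
  · push_neg at hcomp
    obtain ⟨p, q, hpq, hnadj⟩ := hcomp
    obtain ⟨v, _, _, _, hv, _⟩ := dirac (Fintype.card V) G le_rfl hG p q hpq hnadj
    exact ⟨v, hv⟩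

lemma cliqueNum_le_of_embedding {α β : Type*} [Fintype α] [Fintype β] {H : SimpleGraph α}
    {G : SimpleGraph β} (f : H ↪g G) : H.cliqueNum ≤ G.cliqueNum := by
  classical
  obtain ⟨s, hs⟩ := H.exists_isNClique_cliqueNum
  have hclique : G.IsClique ↑(s.image f) := by
    rintro x hx y hy hxy
    simp only [Finset.coe_image, Set.mem_image, Finset.mem_coe] at hx hy
    obtain ⟨u, hu, rfl⟩ := hx
    obtain ⟨w, hw, rfl⟩ := hy
    have huw : u ≠ w := fun h => hxy (h ▸ rfl)
    exact f.map_adj_iff.2 (hs.isClique hu hw huw)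
  have hcard : (s.image f).card = H.cliqueNum := by
    rw [Finset.card_image_of_injective _ f.injective, hs.card_eq]
  calc H.cliqueNum = (s.image f).card := hcard.symm
    _ ≤ G.cliqueNum := IsClique.card_le_cliqueNum (tc := hclique)

/-- A finite chordal graph can be coloured with `cliqueNum` colours. -/
theorem chordal_colorable (n : ℕ) :
    ∀ {V : Type u} [Fintype V] [DecidableEq V] (G : SimpleGraph V),
      Fintype.card V ≤ n → G.IsChordal → G.Colorable G.cliqueNum := by
  induction n with
  | zero =>
    intro V _ _ G hcard _
    have : IsEmpty V := Fintype.card_eq_zero_iff.1 (by omega)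
    exact ⟨⟨fun v => (this.false v).elim, fun {v} => (this.false v).elim⟩⟩
  | succ n ih =>
    intro V _ _ G hcard hG
    classical
    by_cases hemp : IsEmpty V
    · exact ⟨⟨fun v => (hemp.false v).elim, fun {v} => (hemp.false v).elim⟩⟩
    have hne : Nonempty V := not_isEmpty_iff.1 hemp
    obtain ⟨v, hv⟩ := exists_simplicial hG
    set s : Set V := {u | u ≠ v} with hs
    have hvs : v ∉ s := by simp [hs]
    have hcards : Fintype.card ↥s ≤ n := by
      have hlt : Fintype.card ↥s < Fintype.card V := by
        refine Fintype.card_lt_of_injective_of_notMem Subtype.val Subtype.val_injective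
          (b := v) ?_
        rintro ⟨⟨z, hz⟩, hzv⟩
        exact hvs (hzv ▸ hz)
      omega
    have hchord : (G.induce s).IsChordal := IsChordal.comap (Embedding.induce s) hG
    have hcol' : (G.induce s).Colorable (G.induce s).cliqueNum := ih (G.induce s) hcards hchord
    have hcol : (G.induce s).Colorable G.cliqueNum :=
      hcol'.mono (cliqueNum_le_of_embedding (Embedding.induce s))
    obtain ⟨C'⟩ := hcol
    set N : Finset V := G.neighborFinset v with hN
    have hmemN : ∀ u ∈ N, G.Adj v u := fun u hu => (G.mem_neighborFinset v u).1 hu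
    have hclique : G.IsClique ↑(insert v N) := by
      rw [Finset.coe_insert]
      refine IsClique.insert ?_ ?_
      · intro x hx y hy hxy
        exact hv x y (hmemN x hx) (hmemN y hy) hxy
      · intro u hu _
        exact hmemN u hu
    have hkpos : N.card + 1 ≤ G.cliqueNum := by
      have h1 : (insert v N).card = N.card + 1 :=
        Finset.card_insert_of_notMem (fun h => (G.irrefl (hmemN v h)))
      have h2 : (insert v N).card ≤ G.cliqueNum := IsClique.card_le_cliqueNum (tc := hclique)
      omega
    set F : Finset (Fin G.cliqueNum) :=
      N.attach.image (fun u => C' ⟨u.1, (hmemN u.1 u.2).ne'⟩) with hF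
    have hFcard : F.card < G.cliqueNum := by
      have h1 : F.card ≤ N.attach.card := Finset.card_image_le
      rw [Finset.card_attach] at h1
      omega
    obtain ⟨c0, hc0⟩ : ∃ c0, c0 ∉ F := by
      by_contra hcon
      push_neg at hcon
      have huniv : F = Finset.univ := Finset.eq_univ_iff_forall.2 hcon
      rw [huniv, Finset.card_univ, Fintype.card_fin] at hFcard
      omega
    refine ⟨Coloring.mk (fun u => if h : u = v then c0 else C' ⟨u, h⟩) ?_⟩
    intro x y hxy
    split_ifs with h1 h2 h2
    · exact absurd (h1.trans h2.symm) hxy.ne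
    · intro hcon
      apply hc0
      rw [hcon]
      exact Finset.mem_image.2
        ⟨⟨y, (G.mem_neighborFinset v y).2 (h1 ▸ hxy)⟩, Finset.mem_attach _ _, rfl⟩
    · intro hcon
      apply hc0
      rw [← hcon]
      exact Finset.mem_image.2
        ⟨⟨x, (G.mem_neighborFinset v x).2 (h2 ▸ hxy).symm⟩, Finset.mem_attach _ _, rfl⟩
    · exact C'.valid (by simpa [comap_adj] using hxy)

end SimpleGraph

/-- Every chordal graph is perfect: for every induced subgraph of a chordal
graph, the chromatic number equals the clique number. -/
theorem chordal_is_perfect {V : Type*} [Fintype V] (G : SimpleGraph V)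
    (h : G.IsChordal) :
    ∀ s : Set V, (G.induce s).chromaticNumber = ((G.induce s).cliqueNum : ℕ∞) := by
  intro s
  classical
  have hH : (G.induce s).IsChordal := SimpleGraph.IsChordal.comap (SimpleGraph.Embedding.induce s) h
  have hcol : (G.induce s).Colorable (G.induce s).cliqueNum :=
    SimpleGraph.chordal_colorable (Fintype.card ↥s) (G.induce s) le_rfl hH
  refine le_antisymm hcol.chromaticNumber_le ?_
  obtain ⟨t, ht⟩ := (G.induce s).exists_isNClique_cliqueNum
  have := SimpleGraph.IsClique.card_le_chromaticNumber ht.isClique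
  rw [ht.card_eq] at this
  exact this
end
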